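/- The sequence N(m) = m + log(m!) − m·ψ(m+1) is strictly increasing in m for integers m ≥ 0. -/
import Mathlib

open Real Finset

/-- The digamma function at the positive integer `m + 1`:
`ψ(m+1) = -γ + Σ_{k=1}^m 1/k`. -/
noncomputable def psiSucc (m : ℕ) : ℝ :=
  -Real.eulerMascheroniConstant + ∑ k ∈ Finset.range m, (1 : ℝ) / (k + 1)

/-- `N(m) = m + log(m!) − m·ψ(m+1)`. -/
noncomputable def Nfock (m : ℕ) : ℝ :=
  m + Real.log (Nat.factorial m) - m * psiSucc m

lemma harmonic_cast (m : ℕ) : (harmonic m : ℝ) = ∑ k ∈ Finset.range m, (1 : ℝ) / (k + 1) := by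
  induction m with
  | zero => simp
  | succ n ih => rw [harmonic_succ, Finset.sum_range_succ, ← ih]; push_cast; ring

theorem fock_nonclassicality_strictMono : StrictMono Nfock := by
  apply strictMono_nat_of_lt_succ
  intro m
  have hγ := Real.eulerMascheroniSeq_lt_eulerMascheroniConstant m
  rw [Real.eulerMascheroniSeq] at hγ
  have hfac : Real.log (Nat.factorial (m + 1)) =
      Real.log (m + 1) + Real.log (Nat.factorial m) := by
    rw [Nat.factorial_succ]
    push_cast
    rw [Real.log_mul (by positivity) (by exact_mod_cast Nat.factorial_pos m |>.ne')]
  have hsum : psiSucc (m + 1) = psiSucc m + 1 / (m + 1) := by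
    simp [psiSucc, Finset.sum_range_succ]; ring
  have hpsi : psiSucc m = (harmonic m : ℝ) - Real.eulerMascheroniConstant := by
    rw [psiSucc, harmonic_cast]; ring
  have : Nfock (m + 1) - Nfock m = Real.log (m + 1) - psiSucc m := by
    simp only [Nfock, hfac, hsum]
    have h1 : ((m : ℝ) + 1) ≠ 0 := by positivity
    push_cast
    field_simp
    ring
  rw [hpsi] at this
  linarith
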